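/- Let U = u₁ + ... + u_k be a sum of k independent random variables, each uniformly distributed on the set of integers {−(M−1)/2, ..., (M−1)/2} for an odd positive integer M. Then for every integer t, Pr[U = 0] ≥ Pr[U = t]. -/

import Mathlib

open Finset

private noncomputable def cnt (m : ℤ) (k : ℕ) (t : ℤ) : ℕ :=
  ((Fintype.piFinset fun _ : Fin k => Finset.Icc (-m) m).filter
    (fun u => ∑ i, u i = t)).card

private lemma cnt_zero (m t : ℤ) : cnt m 0 t = if t = 0 then 1 else 0 := by
  simp only [cnt]
  split_ifs with h
  · rw [Finset.filter_true_of_mem (fun u _ => by simp [h])]; simp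
  · rw [Finset.filter_false_of_mem (fun u _ => by simp; omega)]; simp

private lemma cnt_succ (m : ℤ) (k : ℕ) (t : ℤ) :
    cnt m (k+1) t = ∑ s ∈ Finset.Icc (-m) m, cnt m k (t - s) := by
  classical
  unfold cnt
  rw [Finset.card_eq_sum_card_fiberwise (f := fun u : Fin (k+1) → ℤ => u 0)
    (t := Finset.Icc (-m) m) (fun u hu => by
      simp only [Finset.mem_coe, Finset.mem_filter, Fintype.mem_piFinset] at hu
      exact hu.1 0)]
  refine Finset.sum_congr rfl fun s hs => ?_
  refine Finset.card_nbij' (i := fun u => Fin.tail u) (j := fun v => Fin.cons s v)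
    ?_ ?_ ?_ ?_
  · intro u hu
    simp only [Finset.mem_coe, Finset.mem_filter, Fintype.mem_piFinset] at hu ⊢
    obtain ⟨⟨h1, h2⟩, h3⟩ := hu
    refine ⟨fun i => h1 i.succ, ?_⟩
    rw [Fin.sum_univ_succ] at h2
    simp only [Fin.tail]
    omega
  · intro v hv
    simp only [Finset.mem_coe, Finset.mem_filter, Fintype.mem_piFinset] at hv ⊢
    obtain ⟨h1, h2⟩ := hv
    refine ⟨⟨fun i => ?_, ?_⟩, by simp⟩
    · rcases Fin.eq_zero_or_eq_succ i with rfl | ⟨j, rfl⟩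
      · simpa using hs
      · simpa using h1 j
    · rw [Fin.sum_univ_succ]
      simp only [Fin.cons_zero, Fin.cons_succ]
      omega
  · intro u hu
    simp only [Finset.mem_coe, Finset.mem_filter] at hu
    rw [← hu.2]
    exact Fin.cons_self_tail u
  · intro v hv
    funext i
    simp [Fin.tail_cons]

private lemma cnt_neg (m : ℤ) (k : ℕ) (t : ℤ) : cnt m k (-t) = cnt m k t := by
  unfold cnt
  refine Finset.card_nbij' (i := fun u i => -(u i)) (j := fun u i => -(u i))
    ?_ ?_ ?_ ?_
  · intro u hu
    simp only [Finset.mem_coe, Finset.mem_filter, Fintype.mem_piFinset, Finset.mem_Icc] at hu ⊢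
    refine ⟨fun i => by have := hu.1 i; omega, ?_⟩
    rw [Finset.sum_neg_distrib]
    omega
  · intro u hu
    simp only [Finset.mem_coe, Finset.mem_filter, Fintype.mem_piFinset, Finset.mem_Icc] at hu ⊢
    refine ⟨fun i => by have := hu.1 i; omega, ?_⟩
    rw [Finset.sum_neg_distrib]
    omega
  · intro u _; funext i; simp
  · intro u _; funext i; simp

private lemma cnt_window (m : ℤ) (k : ℕ) (t : ℤ) :
    cnt m (k+1) t = ∑ j ∈ Finset.Icc (t - m) (t + m), cnt m k j := by
  rw [cnt_succ]
  refine Finset.sum_nbij' (i := fun s => t - s) (j := fun j => t - j)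
    ?_ ?_ ?_ ?_ ?_
  · intro s hs; simp only [Finset.mem_Icc] at hs ⊢; omega
  · intro j hj; simp only [Finset.mem_Icc] at hj ⊢; omega
  · intro s _; omega
  · intro j _; omega
  · intro s _; simp only

private lemma cnt_anti (m : ℤ) (hm : 0 ≤ m) (k : ℕ) :
    ∀ a b : ℤ, 0 ≤ a → a ≤ b → cnt m k b ≤ cnt m k a := by
  induction k with
  | zero =>
    intro a b ha hab
    rw [cnt_zero, cnt_zero]
    split_ifs with h1 h2 <;> omega
  | succ k ih =>
    have adj : ∀ t : ℤ, 0 ≤ t → cnt m (k+1) (t+1) ≤ cnt m (k+1) t := by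
      intro t ht
      rw [cnt_window, cnt_window]
      have key : cnt m k (t + m + 1) ≤ cnt m k (t - m) := by
        rcases le_or_gt t m with h | h
        · have : cnt m k (t - m) = cnt m k (m - t) := by
            rw [show t - m = -(m - t) by ring, cnt_neg]
          rw [this]
          exact ih (m - t) (t + m + 1) (by omega) (by omega)
        · exact ih (t - m) (t + m + 1) (by omega) (by omega)
      have e1 : Finset.Icc (t - m) (t + m + 1) =
          insert (t + m + 1) (Finset.Icc (t - m) (t + m)) := by
        ext x; simp only [Finset.mem_Icc, Finset.mem_insert]; omega
      have e2 : Finset.Icc (t - m) (t + m + 1) =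
          insert (t - m) (Finset.Icc (t + 1 - m) (t + 1 + m)) := by
        ext x; simp only [Finset.mem_Icc, Finset.mem_insert]; omega
      have h1 : (∑ j ∈ Finset.Icc (t - m) (t + m), cnt m k j) + cnt m k (t + m + 1)
          = ∑ j ∈ Finset.Icc (t - m) (t + m + 1), cnt m k j := by
        rw [e1, Finset.sum_insert (by simp only [Finset.mem_Icc]; omega)]
        ring
      have h2 : (∑ j ∈ Finset.Icc (t + 1 - m) (t + 1 + m), cnt m k j) + cnt m k (t - m)
          = ∑ j ∈ Finset.Icc (t - m) (t + m + 1), cnt m k j := by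
        rw [e2, Finset.sum_insert (by simp only [Finset.mem_Icc]; omega)]
        ring
      omega
    intro a b ha hab
    refine Int.le_induction (motive := fun b _ => cnt m (k+1) b ≤ cnt m (k+1) a) le_rfl
      (fun b hb ihb => le_trans (adj b (by omega)) ihb) b hab

theorem stmt6 (M k : ℕ) (hM : 0 < M) (hModd : Odd M) (hk : 1 ≤ k) (t : ℤ) :
    (((Fintype.piFinset fun _ : Fin k =>
          Finset.Icc (-(((M : ℤ) - 1) / 2)) (((M : ℤ) - 1) / 2)).filter
        (fun u => ∑ i, u i = t)).card : ℝ) / (M : ℝ) ^ k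
      ≤ (((Fintype.piFinset fun _ : Fin k =>
          Finset.Icc (-(((M : ℤ) - 1) / 2)) (((M : ℤ) - 1) / 2)).filter
        (fun u => ∑ i, u i = 0)).card : ℝ) / (M : ℝ) ^ k := by
  set m : ℤ := ((M : ℤ) - 1) / 2 with hm_def
  have hm : 0 ≤ m := Int.ediv_nonneg (by omega) (by norm_num)
  show (cnt m k t : ℝ) / (M : ℝ) ^ k ≤ (cnt m k 0 : ℝ) / (M : ℝ) ^ k
  have hc : cnt m k t ≤ cnt m k 0 := by
    rcases le_or_gt 0 t with h | h
    · exact cnt_anti m hm k 0 t le_rfl h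
    · rw [show t = -(-t) by ring, cnt_neg]
      exact cnt_anti m hm k 0 (-t) le_rfl (by omega)
  have hMpos : (0 : ℝ) < (M : ℝ) ^ k := by positivity
  gcongr
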